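/- arXiv:2004.01626 — 2 statements merged into one kernel-verified Lean document; each statement's English description precedes it below -/
import Mathlib

section
/- Let n ≥ 1, let V ⊆ ℝⁿ be a k-dimensional linear subspace and α, β ∈ (0,∞). Then for every a ∈ ℝⁿ the set S_{V,α,β} ∩ (V + a) is bounded; moreover, there exists ε > 0 such that for every k-dimensional linear subspace W ⊆ ℝⁿ whose orthogonal projection satisfies ‖Π_W − Π_V‖ < ε (operator norm) and every a ∈ ℝⁿ, the set S_{V,α,β} ∩ (W + a) is bounded. -/
open MeasureTheory Metric Set
open scoped ENNReal NNReal

noncomputable section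

/-- The cone `K_{V,α,β} = {ξ : |Π_V ξ| ≥ α and |ξ − Π_V ξ| ≤ β |Π_V ξ|}`. -/
def coneK {n : ℕ} (V : Submodule ℝ (EuclideanSpace ℝ (Fin n))) (α β : ℝ) :
    Set (EuclideanSpace ℝ (Fin n)) :=
  {ξ | α ≤ ‖(V.orthogonalProjectionOnto ξ : EuclideanSpace ℝ (Fin n))‖ ∧
    ‖ξ - (V.orthogonalProjectionOnto ξ : EuclideanSpace ℝ (Fin n))‖ ≤
      β * ‖(V.orthogonalProjectionOnto ξ : EuclideanSpace ℝ (Fin n))‖}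

/-- Fourier transform of the complex measure `μ = f·ν`:
`μ̂(ξ) = ∫ e^{−2πi⟨ξ,x⟩} f(x) dν(x)`. -/
def fourierOf {n : ℕ} (ν : Measure (EuclideanSpace ℝ (Fin n)))
    (f : EuclideanSpace ℝ (Fin n) → ℂ) (ξ : EuclideanSpace ℝ (Fin n)) : ℂ :=
  ∫ x, Complex.exp (-2 * Real.pi * Complex.I * ((inner ℝ ξ x : ℝ) : ℂ)) * f x ∂ν


/-- The orthogonal projection onto `W`, as a continuous linear map `ℝⁿ → ℝⁿ`. -/
def projCL {n : ℕ} (W : Submodule ℝ (EuclideanSpace ℝ (Fin n))) :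
    EuclideanSpace ℝ (Fin n) →L[ℝ] EuclideanSpace ℝ (Fin n) :=
  W.subtypeL.comp W.orthogonalProjectionOnto

lemma projCL_norm_le {n : ℕ} (W : Submodule ℝ (EuclideanSpace ℝ (Fin n)))
    (x : EuclideanSpace ℝ (Fin n)) : ‖projCL W x‖ ≤ ‖x‖ := by
  have h : ‖projCL W x‖ = ‖W.orthogonalProjectionOnto x‖ := rfl
  rw [h]
  calc ‖W.orthogonalProjectionOnto x‖ ≤ ‖(W.orthogonalProjectionOnto : _ →L[ℝ] W)‖ * ‖x‖ :=
        W.orthogonalProjectionOnto.le_opNorm x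
    _ ≤ 1 * ‖x‖ := mul_le_mul_of_nonneg_right (Submodule.orthogonalProjectionOnto_norm_le W) (norm_nonneg x)
    _ = ‖x‖ := one_mul _

lemma stmt3_key {n : ℕ}
    (V : Submodule ℝ (EuclideanSpace ℝ (Fin n)))
    (α β : ℝ) (hα : 0 < α) (hβ : 0 < β)
    (W : Submodule ℝ (EuclideanSpace ℝ (Fin n)))
    (hW : ‖projCL W - projCL V‖ < min (1/2) (β/(2*(1+β))))
    (a : EuclideanSpace ℝ (Fin n)) :
    Bornology.IsBounded ((coneK V α β)ᶜ ∩ ((fun w => w + a) '' (W : Set _))) := by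
  set ε : ℝ := min (1/2) (β/(2*(1+β))) with hεdef
  set A := ‖a‖ with hA
  apply (Metric.isBounded_closedBall (x := (0 : EuclideanSpace ℝ (Fin n)))
    (r := max (2*(α+2*A)) (4*A*(1+β)/β))).subset
  rintro ξ ⟨hξc, w, hw, rfl⟩
  simp only [Metric.mem_closedBall, dist_zero_right]
  by_contra hbig
  push_neg at hbig
  have ht1 : 2*(α+2*A) < ‖w + a‖ := lt_of_le_of_lt (le_max_left _ _) hbig
  have ht2 : 4*A*(1+β)/β < ‖w + a‖ := lt_of_le_of_lt (le_max_right _ _) hbig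
  set t := ‖w + a‖ with htdef
  have hA0 : 0 ≤ A := norm_nonneg a
  have ht0 : 0 ≤ t := norm_nonneg _
  have hε1 : ε ≤ 1/2 := min_le_left _ _
  have hε2 : ε ≤ β/(2*(1+β)) := min_le_right _ _
  have hε0 : 0 ≤ ε := le_min (by norm_num) (by positivity)
  have hε2' : 2*ε*(1+β) ≤ β := by
    have h := (le_div_iff₀ (show (0:ℝ) < 2*(1+β) by positivity)).mp hε2
    linarith
  have ht2' : 4*A*(1+β) < β * t := by
    have h := (div_lt_iff₀ hβ).mp ht2
    linarith
  -- projection facts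
  have hPw : projCL W w = w := by
    simp only [projCL, ContinuousLinearMap.comp_apply, Submodule.subtypeL_apply]
    exact Submodule.starProjection_eq_self_iff.mpr hw
  have hmap : projCL W (w + a) = w + projCL W a := by rw [map_add, hPw]
  have hpa : ‖projCL W a‖ ≤ A := projCL_norm_le W a
  set q := ‖projCL W (w + a)‖ with hqdef
  set p := ‖projCL V (w + a)‖ with hpdef
  set d := ‖(w + a) - projCL V (w + a)‖ with hddef
  have hp0 : 0 ≤ p := norm_nonneg _
  -- q ≥ t - 2A
  have hwnorm : t - A ≤ ‖w‖ := by
    have := norm_add_le w a; linarith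
  have hq1 : t - 2*A ≤ q := by
    have h := norm_add_le (w + projCL W a) (-(projCL W a))
    simp only [add_neg_cancel_right, norm_neg] at h
    rw [hqdef, hmap]
    linarith
  -- p ≥ q - ε t
  have hdiff : ‖projCL W (w + a) - projCL V (w + a)‖ ≤ ε * t := by
    have h := (projCL W - projCL V).le_opNorm (w + a)
    simp only [ContinuousLinearMap.sub_apply] at h
    have h2 := mul_le_mul_of_nonneg_right hW.le ht0
    linarith
  have hp1 : q - ε * t ≤ p := by
    have h := norm_sub_norm_le (projCL W (w + a)) (projCL V (w + a))
    linarith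
  -- d ≤ 2A + ε t
  have hd1 : d ≤ 2*A + ε * t := by
    have htri : d ≤ ‖(w + a) - projCL W (w + a)‖ + ‖projCL W (w + a) - projCL V (w + a)‖ := by
      rw [hddef]
      have := dist_triangle (w + a) (projCL W (w + a)) (projCL V (w + a))
      simpa [dist_eq_norm] using this
    have heq : (w + a) - projCL W (w + a) = a - projCL W a := by
      rw [hmap]; abel
    have h2 : ‖(w + a) - projCL W (w + a)‖ ≤ 2*A := by
      rw [heq]
      have := norm_sub_le a (projCL W a)
      linarith
    linarith
  -- conclude membership in the cone
  refine hξc ⟨?_, ?_⟩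
  · show α ≤ ‖(V.orthogonalProjectionOnto (w + a) : EuclideanSpace ℝ (Fin n))‖
    have : ‖(V.orthogonalProjectionOnto (w + a) : EuclideanSpace ℝ (Fin n))‖ = p := rfl
    rw [this]
    nlinarith
  · show ‖(w + a) - (V.orthogonalProjectionOnto (w + a) : EuclideanSpace ℝ (Fin n))‖ ≤
      β * ‖(V.orthogonalProjectionOnto (w + a) : EuclideanSpace ℝ (Fin n))‖
    have h1 : ‖(V.orthogonalProjectionOnto (w + a) : EuclideanSpace ℝ (Fin n))‖ = p := rfl
    have h2 : ‖(w + a) - (V.orthogonalProjectionOnto (w + a) : EuclideanSpace ℝ (Fin n))‖ = d := rfl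
    rw [h1, h2]
    nlinarith

/-- `S_{V,α,β} ∩ (V + a)` is bounded for every `a`, and the same holds
for every `k`-dimensional subspace `W` whose orthogonal projection is close enough
(in operator norm) to that of `V`. -/
theorem stmt3 {n k : ℕ} (hn : 1 ≤ n)
    (V : Submodule ℝ (EuclideanSpace ℝ (Fin n))) (hV : Module.finrank ℝ V = k)
    (α β : ℝ) (hα : 0 < α) (hβ : 0 < β) :
    (∀ a : EuclideanSpace ℝ (Fin n),
      Bornology.IsBounded ((coneK V α β)ᶜ ∩ ((fun w => w + a) '' (V : Set _)))) ∧
    ∃ ε > (0 : ℝ), ∀ W : Submodule ℝ (EuclideanSpace ℝ (Fin n)),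
      Module.finrank ℝ W = k → ‖projCL W - projCL V‖ < ε →
      ∀ a : EuclideanSpace ℝ (Fin n),
        Bornology.IsBounded ((coneK V α β)ᶜ ∩ ((fun w => w + a) '' (W : Set _))) := by
  have hεpos : (0:ℝ) < min (1/2) (β/(2*(1+β))) :=
    lt_min (by norm_num) (by positivity)
  constructor
  · intro a
    apply stmt3_key V α β hα hβ V _ a
    rw [sub_self, norm_zero]
    exact hεpos
  · exact ⟨_, hεpos, fun W _ h a => stmt3_key V α β hα hβ W h a⟩
end
end

section
/- Let n ≥ 2 and z₀ ∈ S^{2n−1}. Denote by T_{z₀}S^{2n−1} = {v ∈ ℂⁿ : Re⟨v, z₀⟩_{ℂⁿ} = 0} the real tangent space at z₀, by T^ℂ_{z₀}S^{2n−1} = {v ∈ ℂⁿ : ⟨v, z₀⟩_{ℂⁿ} = 0} the complex tangent space, and by Π the orthogonal projection of T_{z₀}S^{2n−1} onto T^ℂ_{z₀}S^{2n−1}. Then there exist an open neighborhood U of z₀ in S^{2n−1} and a map Φ : U → T_{z₀}S^{2n−1} which is a smooth diffeomorphism onto an open subset of T_{z₀}S^{2n−1}, Lipschitz on U, with Φ(z₀)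 = 0, such that for every set E ⊆ S^{2n−1} with H^{2n−2}(E) = 0 one has H^{2n−2}(Π(Φ(𝕋·E ∩ U))) = 0. -/
open MeasureTheory Metric Set
open scoped ENNReal NNReal

noncomputable section

instance {n : ℕ} : MeasurableSpace (EuclideanSpace ℂ (Fin n)) := borel _
instance {n : ℕ} : BorelSpace (EuclideanSpace ℂ (Fin n)) := ⟨rfl⟩

/-- The unit sphere `S^{2n−1} ⊆ ℂⁿ`. -/
def unitSphere (n : ℕ) : Set (EuclideanSpace ℂ (Fin n)) :=
  Metric.sphere 0 1

/-- The real Laplacian (in the `2n` real variables) of `P : ℂⁿ → ℂ` at `z`, computed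
with respect to the orthonormal real basis `e_j, i·e_j`. -/
def cplxLaplacian {n : ℕ} (P : EuclideanSpace ℂ (Fin n) → ℂ)
    (z : EuclideanSpace ℂ (Fin n)) : ℂ :=
  ∑ j : Fin n,
    (fderiv ℝ (fun w => fderiv ℝ P w (EuclideanSpace.single j 1)) z
        (EuclideanSpace.single j 1) +
      fderiv ℝ (fun w => fderiv ℝ P w (Complex.I • EuclideanSpace.single j 1)) z
        (Complex.I • EuclideanSpace.single j 1))

/-- `P : ℂⁿ → ℂ` is (the extension of) an element of `H(p,q)`: smooth, harmonic in the
`2n` real variables, and `(p,q)`-homogeneous: `P(λz) = λᵖ (conj λ)^q P(z)`. -/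
def MemHpq (n p q : ℕ) (P : EuclideanSpace ℂ (Fin n) → ℂ) : Prop :=
  ContDiff ℝ (⊤ : ℕ∞) P ∧ (∀ z, cplxLaplacian P z = 0) ∧
  ∀ (c : ℂ) (z : EuclideanSpace ℂ (Fin n)),
    P (c • z) = c ^ p * (starRingEnd ℂ c) ^ q * P z

/-- `π_{p,q}μ = 0` for the complex measure `μ = f·ν` on the sphere:
`∫ conj(h) dμ = 0` for every `h ∈ H(p,q)`. -/
def projPQZero {n : ℕ} (ν : Measure (EuclideanSpace ℂ (Fin n)))
    (f : EuclideanSpace ℂ (Fin n) → ℂ) (p q : ℕ) : Prop :=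
  ∀ P : EuclideanSpace ℂ (Fin n) → ℂ, MemHpq n p q P →
    ∫ z, (starRingEnd ℂ) (P z) * f z ∂ν = 0

/-- `(p,q) ∈ κ(ε) = {(x,y) ∈ (0,∞)² : 1−ε < y/x < 1/(1−ε)}`. -/
def memKappa (ε : ℝ) (p q : ℕ) : Prop :=
  0 < p ∧ 0 < q ∧ 1 - ε < (q : ℝ) / p ∧ (q : ℝ) / p < 1 / (1 - ε)

/-- The circle orbit `𝕋·E = {e^{it} z : z ∈ E, t ∈ ℝ}`. -/
def circleOrbit {n : ℕ} (E : Set (EuclideanSpace ℂ (Fin n))) :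
    Set (EuclideanSpace ℂ (Fin n)) :=
  {w | ∃ z ∈ E, ∃ t : ℝ, w = Complex.exp (t * Complex.I) • z}

/-- The orthogonal projection of the real tangent space `T_{z₀}S^{2n−1}` onto the
complex tangent space `T^ℂ_{z₀}S^{2n−1}`, given by `v ↦ v − ⟨z₀,v⟩·z₀` (Hermitian
inner product, linear in the second variable). -/
def complexTangentProj {n : ℕ} (z₀ : EuclideanSpace ℂ (Fin n)) :
    EuclideanSpace ℂ (Fin n) → EuclideanSpace ℂ (Fin n) :=
  fun v => v - (inner ℂ z₀ v : ℂ) • z₀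

/-- The real tangent space `T_{z₀}S^{2n−1} = {v : Re⟨v,z₀⟩ = 0}`, as a set. -/
def realTangent {n : ℕ} (z₀ : EuclideanSpace ℂ (Fin n)) :
    Set (EuclideanSpace ℂ (Fin n)) :=
  {v | (inner ℂ z₀ v : ℂ).re = 0}

variable {n : ℕ}

local notation "⟪" x ", " y "⟫" => @inner ℂ _ _ x y

abbrev ESp (n : ℕ) := EuclideanSpace ℂ (Fin n)

def auxU (z₀ z : ESp n) : ℂ := ⟪z₀, z⟫

lemma contDiff_csmul {X E : Type*} [NormedAddCommGroup X] [NormedSpace ℝ X]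
    [NormedAddCommGroup E] [NormedSpace ℂ E] {f : X → ℂ} {g : X → E} {m : ℕ∞}
    (hf : ContDiff ℝ m f) (hg : ContDiff ℝ m g) :
    ContDiff ℝ m (fun x => f x • g x) := by
  have h : ContDiff ℝ m (fun p : ℂ × E => p.1 • p.2) :=
    (ContinuousLinearMap.lsmul ℝ ℂ).isBoundedBilinearMap.contDiff
  exact h.comp (ContDiff.prodMk hf hg)

lemma contDiff_auxU (z₀ : ESp n) : ContDiff ℝ (⊤ : ℕ∞) (auxU z₀) :=
  ((innerSL ℂ z₀).restrictScalars ℝ).contDiff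

lemma contDiff_conj : ContDiff ℝ (⊤ : ℕ∞) (starRingEnd ℂ) :=
  (RCLike.conjCLE (K := ℂ)).toContinuousLinearMap.contDiff

def auxG (z₀ z : ESp n) : ESp n :=
  (starRingEnd ℂ (auxU z₀ z)) • z - (starRingEnd ℂ (auxU z₀ z) * auxU z₀ z) • z₀

def auxPhi (z₀ z : ESp n) : ESp n :=
  (((auxU z₀ z).im : ℂ) * Complex.I) • z₀ + auxG z₀ z

def auxS (z₀ v : ESp n) : ℝ := (⟪z₀, v⟫ : ℂ).im
def auxM (z₀ v : ESp n) : ℝ := ‖complexTangentProj z₀ v‖ ^ 2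
def auxT (z₀ v : ESp n) : ℝ := (1 + Real.sqrt (1 - 4 * auxM z₀ v)) / 2
def auxR (z₀ v : ESp n) : ℝ := Real.sqrt (auxT z₀ v - (auxS z₀ v) ^ 2)
def auxUv (z₀ v : ESp n) : ℂ := (auxR z₀ v : ℂ) + (auxS z₀ v : ℂ) * Complex.I
def auxPsi (z₀ v : ESp n) : ESp n :=
  auxUv z₀ v • z₀ + (starRingEnd ℂ (auxUv z₀ v))⁻¹ • complexTangentProj z₀ v

lemma contDiff_phi (z₀ : ESp n) : ContDiff ℝ (⊤ : ℕ∞) (auxPhi z₀) := by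
  unfold auxPhi auxG
  have hu := contDiff_auxU z₀
  have hcu : ContDiff ℝ (⊤ : ℕ∞) (fun z => starRingEnd ℂ (auxU z₀ z)) :=
    contDiff_conj.comp hu
  have him : ContDiff ℝ (⊤ : ℕ∞) (fun z : ESp n => (((auxU z₀ z).im : ℂ) * Complex.I)) := by
    exact ((Complex.ofRealCLM.contDiff.comp (Complex.imCLM.contDiff.comp hu)).mul contDiff_const)
  exact (contDiff_csmul him contDiff_const).add
    ((contDiff_csmul hcu contDiff_id).sub
      (contDiff_csmul (hcu.mul hu) contDiff_const))

lemma contDiff_proj (z₀ : ESp n) : ContDiff ℝ (⊤ : ℕ∞) (complexTangentProj z₀) := by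
  unfold complexTangentProj
  exact contDiff_id.sub (contDiff_csmul (contDiff_auxU z₀) contDiff_const)

-- algebra lemmas, under h1
section Alg
variable {z₀ : ESp n}

lemma inner_phi (h1 : (⟪z₀, z₀⟫ : ℂ) = 1) (z : ESp n) :
    ⟪z₀, auxPhi z₀ z⟫ = ((auxU z₀ z).im : ℂ) * Complex.I := by
  simp only [auxPhi, auxG, inner_add_right, inner_sub_right, inner_smul_right, h1, auxU]
  ring

lemma inner_G (h1 : (⟪z₀, z₀⟫ : ℂ) = 1) (z : ESp n) : ⟪z₀, auxG z₀ z⟫ = 0 := by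
  simp only [auxG, inner_sub_right, inner_smul_right, h1, auxU]
  ring

lemma proj_phi (h1 : (⟪z₀, z₀⟫ : ℂ) = 1) (z : ESp n) :
    complexTangentProj z₀ (auxPhi z₀ z) = auxG z₀ z := by
  rw [complexTangentProj, inner_phi h1, auxPhi]
  abel

lemma G_eq (z : ESp n) :
    auxG z₀ z = (starRingEnd ℂ (auxU z₀ z)) • (z - auxU z₀ z • z₀) := by
  rw [auxG, smul_sub, smul_smul]

lemma inner_proj (h1 : (⟪z₀, z₀⟫ : ℂ) = 1) (v : ESp n) : ⟪z₀, complexTangentProj z₀ v⟫ = 0 := by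
  simp only [complexTangentProj, inner_sub_right, inner_smul_right, h1]
  ring

lemma norm_G_sq (h1 : (⟪z₀, z₀⟫ : ℂ) = 1) (hz0 : ‖z₀‖ = 1) (z : ESp n) (hz : ‖z‖ = 1) :
    ‖auxG z₀ z‖ ^ 2 =
      Complex.normSq (auxU z₀ z) * (1 - Complex.normSq (auxU z₀ z)) := by
  rw [G_eq, norm_smul]
  have h2 : ‖z - auxU z₀ z • z₀‖ ^ 2 = 1 - Complex.normSq (auxU z₀ z) := by
    rw [@norm_sub_sq ℂ]
    have h3 : ⟪z, auxU z₀ z • z₀⟫ = (Complex.normSq (auxU z₀ z) : ℂ) := by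
      simp only [auxU, inner_smul_right, ← inner_conj_symm z z₀]
      rw [Complex.mul_conj]
    rw [h3, norm_smul, hz, hz0]
    simp only [Complex.ofReal_re, RCLike.re_to_complex, mul_one, one_pow, mul_pow]
    rw [Complex.sq_norm]
    ring
  rw [mul_pow, h2, Complex.norm_conj, Complex.sq_norm]

lemma psi_phi (h1 : (⟪z₀, z₀⟫ : ℂ) = 1) (hz0 : ‖z₀‖ = 1) (z : ESp n) (hz : ‖z‖ = 1)
    (hre : 1/2 < (auxU z₀ z).re) (hm : auxM z₀ (auxPhi z₀ z) < 1/16) :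
    auxPsi z₀ (auxPhi z₀ z) = z := by
  set u := auxU z₀ z with hu
  set τ := Complex.normSq u with hτ
  have hτ_eq : τ = u.re * u.re + u.im * u.im := Complex.normSq_apply u
  have hτnorm : τ = ‖u‖ ^ 2 := by rw [hτ, ← Complex.sq_norm]
  have hτ1 : τ ≤ 1 := by
    have h : ‖u‖ ≤ 1 := by
      have h' := norm_inner_le_norm (𝕜 := ℂ) z₀ z
      rw [hz0, hz, mul_one] at h'
      exact h'
    rw [hτnorm]; nlinarith [norm_nonneg u]
  have hmval : auxM z₀ (auxPhi z₀ z) = τ * (1 - τ) := by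
    rw [auxM, proj_phi h1, norm_G_sq h1 hz0 z hz]
  have hτhalf : 1/2 < τ := by nlinarith
  have hs_ : auxS z₀ (auxPhi z₀ z) = u.im := by
    rw [auxS, inner_phi h1]; simp; rfl
  have ht_ : auxT z₀ (auxPhi z₀ z) = τ := by
    rw [auxT, hmval]
    have : 1 - 4 * (τ * (1 - τ)) = (2 * τ - 1) ^ 2 := by ring
    rw [this, Real.sqrt_sq (by linarith)]
    ring
  have hr_ : auxR z₀ (auxPhi z₀ z) = u.re := by
    rw [auxR, ht_, hs_]
    have : τ - u.im ^ 2 = u.re ^ 2 := by rw [hτ_eq]; ring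
    rw [this, Real.sqrt_sq (by linarith)]
  have huv : auxUv z₀ (auxPhi z₀ z) = u := by
    rw [auxUv, hr_, hs_, Complex.re_add_im]
  have hu0 : starRingEnd ℂ u ≠ 0 := by
    simp only [ne_eq, map_eq_zero]
    intro h; rw [h] at hre; simp at hre; linarith
  rw [auxPsi, huv, proj_phi h1, G_eq, smul_smul, inv_mul_cancel₀ hu0, one_smul]
  abel

lemma phi_psi (h1 : (⟪z₀, z₀⟫ : ℂ) = 1) (hz0 : ‖z₀‖ = 1) (v : ESp n)
    (hvre : (⟪z₀, v⟫ : ℂ).re = 0) (hm : auxM z₀ v < 1/16) (hs2 : (auxS z₀ v) ^ 2 < 1/16) :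
    auxPhi z₀ (auxPsi z₀ v) = v ∧ ‖auxPsi z₀ v‖ = 1 ∧
      1/2 < (auxU z₀ (auxPsi z₀ v)).re := by
  set z := auxPsi z₀ v with hz
  set σ := auxS z₀ v with hσ
  set ζ := complexTangentProj z₀ v with hζ
  set m := auxM z₀ v with hm'
  set e := Real.sqrt (1 - 4 * m) with he
  set t := auxT z₀ v with ht
  set r := auxR z₀ v with hr
  set u := auxUv z₀ v with hu
  -- bridging equations using the definitions
  have hm0 : 0 ≤ m := by rw [hm', auxM]; positivity
  have he2 : e ^ 2 = 1 - 4 * m := by rw [he]; exact Real.sq_sqrt (by linarith)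
  have he0 : 0 ≤ e := by rw [he]; exact Real.sqrt_nonneg _
  have ht_def : t = (1 + e) / 2 := by rw [ht, auxT, ← hm', ← he]
  have hσim : (⟪z₀, v⟫ : ℂ).im = σ := by rw [hσ, auxS]
  have hiζ : ⟪z₀, ζ⟫ = 0 := by rw [hζ]; exact inner_proj h1 v
  have hζdef : ζ = v - (⟪z₀, v⟫ : ℂ) • z₀ := by rw [hζ, complexTangentProj]
  have hmζ : m = ‖ζ‖ ^ 2 := by rw [hm', auxM, ← hζ]
  have hure : u.re = r := by rw [hu, auxUv, ← hr, ← hσ]; simp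
  have huim : u.im = σ := by rw [hu, auxUv, ← hr, ← hσ]; simp
  have htσ0 : 0 ≤ t - σ ^ 2 := by rw [ht_def]; linarith
  have hr2 : r ^ 2 = t - σ ^ 2 := by
    rw [hr, auxR, ← ht, ← hσ]; exact Real.sq_sqrt htσ0
  have hr0 : 0 ≤ r := by rw [hr]; exact Real.sqrt_nonneg _
  have hpsidef : z = u • z₀ + (starRingEnd ℂ u)⁻¹ • ζ := by
    rw [hz, auxPsi, ← hu, ← hζ]
  clear_value z σ ζ m e t r u
  clear hz hσ hζ hm' he ht hr hu
  -- now pure arithmetic with opaque variables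
  have hehalf : 1/2 < e := by nlinarith
  have ht34 : 3/4 < t := by rw [ht_def]; linarith
  have htσ : 1/4 < t - σ ^ 2 := by linarith
  have hrhalf : 1/2 < r := by nlinarith [hr2, hr0, htσ]
  have hnsq : Complex.normSq u = t := by
    rw [Complex.normSq_apply, hure, huim]; linear_combination hr2
  have hu0 : u ≠ 0 := by
    intro h; rw [h] at hure; simp at hure; linarith
  have hcu0 : starRingEnd ℂ u ≠ 0 := by simpa using hu0
  have hinnerv : (⟪z₀, v⟫ : ℂ) = (σ : ℂ) * Complex.I := by
    apply Complex.ext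
    · simpa using hvre
    · simpa using hσim
  have hvdec : v = ((σ : ℂ) * Complex.I) • z₀ + ζ := by
    rw [hζdef, hinnerv]; abel
  have hUz : auxU z₀ z = u := by
    rw [auxU, hpsidef, inner_add_right, inner_smul_right, inner_smul_right, h1, hiζ]
    ring
  have ht0 : t ≠ 0 := by linarith
  have htt : t ^ 2 = t - m := by rw [ht_def]; linear_combination he2 / 4
  have hnorm : ‖z‖ = 1 := by
    have hcross : ⟪u • z₀, (starRingEnd ℂ u)⁻¹ • ζ⟫ = 0 := by
      rw [inner_smul_left, inner_smul_right, hiζ]; ring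
    have hsq : ‖z‖ ^ 2 = 1 := by
      rw [hpsidef, @norm_add_sq ℂ, hcross]
      simp only [RCLike.zero_re, mul_zero, add_zero, map_zero]
      rw [norm_smul, norm_smul, hz0, mul_one]
      have h5 : ‖u‖ ^ 2 = t := by rw [← hnsq, ← Complex.sq_norm]
      have h6 : ‖(starRingEnd ℂ u)⁻¹‖ ^ 2 = t⁻¹ := by
        rw [norm_inv, Complex.norm_conj, inv_pow, Complex.sq_norm, hnsq]
      rw [mul_pow, h5, h6, ← hmζ]
      field_simp
      linear_combination htt
    have h0 := norm_nonneg z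
    have h9 : (‖z‖ - 1) * (‖z‖ + 1) = 0 := by linear_combination hsq
    rcases mul_eq_zero.1 h9 with h | h
    · linarith
    · linarith
  refine ⟨?_, hnorm, by rw [hUz, hure]; exact hrhalf⟩
  rw [auxPhi, hUz, huim]
  have h7 : z - u • z₀ = (starRingEnd ℂ u)⁻¹ • ζ := by
    rw [hpsidef]; abel
  have hG : auxG z₀ z = ζ := by
    rw [G_eq, hUz, h7, smul_smul, mul_inv_cancel₀ hcu0, one_smul]
  rw [hG, ← hvdec]

end Alg

lemma contDiffAt_csmul {X E : Type*} [NormedAddCommGroup X] [NormedSpace ℝ X]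
    [NormedAddCommGroup E] [NormedSpace ℂ E] {f : X → ℂ} {g : X → E} {m : ℕ∞} {x : X}
    (hf : ContDiffAt ℝ m f x) (hg : ContDiffAt ℝ m g x) :
    ContDiffAt ℝ m (fun y => f y • g y) x := by
  have h : ContDiff ℝ m (fun p : ℂ × E => p.1 • p.2) :=
    (ContinuousLinearMap.lsmul ℝ ℂ).isBoundedBilinearMap.contDiff
  exact h.contDiffAt.comp x (ContDiffAt.prodMk hf hg)

lemma contDiff_auxM (z₀ : ESp n) : ContDiff ℝ (⊤ : ℕ∞) (auxM z₀) :=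
  (contDiff_norm_sq ℂ).comp (contDiff_proj z₀)

lemma contDiff_auxS (z₀ : ESp n) : ContDiff ℝ (⊤ : ℕ∞) (auxS z₀) :=
  Complex.imCLM.contDiff.comp (contDiff_auxU z₀)

lemma contDiff_G (z₀ : ESp n) : ContDiff ℝ (⊤ : ℕ∞) (auxG z₀) := by
  unfold auxG
  have hu := contDiff_auxU z₀
  have hcu : ContDiff ℝ (⊤ : ℕ∞) (fun z => starRingEnd ℂ (auxU z₀ z)) :=
    contDiff_conj.comp hu
  exact (contDiff_csmul hcu contDiff_id).sub (contDiff_csmul (hcu.mul hu) contDiff_const)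

lemma contDiffOn_psi (z₀ : ESp n) :
    ContDiffOn ℝ (⊤ : ℕ∞) (auxPsi z₀)
      {v | auxM z₀ v < 1/16 ∧ (auxS z₀ v) ^ 2 < 1/16} := by
  intro v hv
  obtain ⟨hm, hs2⟩ := hv
  have hm0 : 0 ≤ auxM z₀ v := by rw [auxM]; positivity
  apply ContDiffAt.contDiffWithinAt
  have hMat : ContDiffAt ℝ (⊤ : ℕ∞) (auxM z₀) v := (contDiff_auxM z₀).contDiffAt
  have hSat : ContDiffAt ℝ (⊤ : ℕ∞) (auxS z₀) v := (contDiff_auxS z₀).contDiffAt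
  have h14 : (0:ℝ) < 1 - 4 * auxM z₀ v := by linarith
  have hEat : ContDiffAt ℝ (⊤ : ℕ∞) (fun w => Real.sqrt (1 - 4 * auxM z₀ w)) v := by
    exact (Real.contDiffAt_sqrt h14.ne').comp v
      (contDiffAt_const.sub (contDiffAt_const.mul hMat))
  have hTat : ContDiffAt ℝ (⊤ : ℕ∞) (auxT z₀) v := by
    unfold auxT
    exact (contDiffAt_const.add hEat).div_const 2
  have hsqnn : 0 ≤ Real.sqrt (1 - 4 * auxM z₀ v) := Real.sqrt_nonneg _
  have htσpos : 0 < auxT z₀ v - (auxS z₀ v) ^ 2 := by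
    rw [auxT]; linarith
  have hRat : ContDiffAt ℝ (⊤ : ℕ∞) (auxR z₀) v := by
    unfold auxR
    exact (Real.contDiffAt_sqrt htσpos.ne').comp v (hTat.sub (hSat.pow 2))
  have hUvat : ContDiffAt ℝ (⊤ : ℕ∞) (auxUv z₀) v := by
    unfold auxUv
    exact ((Complex.ofRealCLM.contDiff.contDiffAt.comp v hRat)).add
      (((Complex.ofRealCLM.contDiff.contDiffAt.comp v hSat)).mul contDiffAt_const)
  have hRpos : 0 < auxR z₀ v := Real.sqrt_pos.2 htσpos
  have hcu0 : starRingEnd ℂ (auxUv z₀ v) ≠ 0 := by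
    simp only [ne_eq, map_eq_zero]
    intro h
    have : (auxUv z₀ v).re = auxR z₀ v := by simp [auxUv]
    rw [h] at this; simp at this; linarith
  have hInv : ContDiffAt ℝ (⊤ : ℕ∞) (fun w => (starRingEnd ℂ (auxUv z₀ w))⁻¹) v :=
    (contDiff_conj.contDiffAt.comp v hUvat).inv hcu0
  exact (contDiffAt_csmul hUvat contDiffAt_const).add
    (contDiffAt_csmul hInv (contDiff_proj z₀).contDiffAt)

lemma lipschitz_of_contDiff (f : ESp n → ESp n) (hf : ContDiff ℝ (⊤ : ℕ∞) f) :
    ∃ K : ℝ≥0, LipschitzOnWith K f (closedBall (0 : ESp n) 1) := by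
  have hd : Differentiable ℝ f := hf.differentiable (by norm_num)
  have hc : Continuous fun x => ‖fderiv ℝ f x‖ := (hf.continuous_fderiv (by norm_num)).norm
  obtain ⟨C, hC⟩ := (isCompact_closedBall (0 : ESp n) 1).exists_bound_of_continuousOn
    hc.continuousOn
  refine ⟨(⟨max C 0, le_max_right _ _⟩ : ℝ≥0), ?_⟩
  apply (convex_closedBall (0 : ESp n) 1).lipschitzOnWith_of_nnnorm_fderiv_le
    (fun x _ => hd x)
  intro x hx
  have h1' : ‖fderiv ℝ f x‖ ≤ C := by
    have h2' := hC x hx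
    rwa [Real.norm_eq_abs, abs_of_nonneg (norm_nonneg _)] at h2'
  apply NNReal.coe_le_coe.1; rw [coe_nnnorm]
  exact le_trans h1' (le_max_left C 0)

lemma auxG_inv (z₀ z : ESp n) (t : ℝ) :
    auxG z₀ (Complex.exp (t * Complex.I) • z) = auxG z₀ z := by
  set c := Complex.exp (t * Complex.I) with hc
  have habs : ‖c‖ = 1 := Complex.norm_exp_ofReal_mul_I t
  have hcc : starRingEnd ℂ c * c = 1 := by
    rw [mul_comm, Complex.mul_conj, Complex.normSq_eq_norm_sq, habs]
    norm_num
  have hU : auxU z₀ (c • z) = c * auxU z₀ z := by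
    rw [auxU, auxU, inner_smul_right]
  simp only [auxG, hU, map_mul, smul_smul]
  congr 1
  · congr 1
    linear_combination (starRingEnd ℂ (auxU z₀ z)) * hcc
  · congr 1
    linear_combination (starRingEnd ℂ (auxU z₀ z) * auxU z₀ z) * hcc



/-- near any `z₀ ∈ S^{2n−1}` there is a Lipschitz smooth diffeomorphism
`Φ` of a neighbourhood `U` of `z₀` in the sphere onto a relatively open subset of the
tangent space, with `Φ(z₀) = 0`, flattening the `𝕋`-orbits: projecting `Φ(𝕋·E ∩ U)`
to the complex tangent space preserves `H^{2n−2}`-nullity. -/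
theorem stmt13 {n : ℕ} (hn : 2 ≤ n)
    (z₀ : EuclideanSpace ℂ (Fin n)) (hz₀ : z₀ ∈ unitSphere n) :
    ∃ (U' W : Set (EuclideanSpace ℂ (Fin n)))
      (Φ Ψ : EuclideanSpace ℂ (Fin n) → EuclideanSpace ℂ (Fin n)) (K : ℝ≥0),
      IsOpen U' ∧ z₀ ∈ U' ∧ IsOpen W ∧
      ContDiffOn ℝ (⊤ : ℕ∞) Φ U' ∧
      Φ z₀ = 0 ∧
      Set.InjOn Φ (U' ∩ unitSphere n) ∧
      Φ '' (U' ∩ unitSphere n) = W ∩ realTangent z₀ ∧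
      ContDiffOn ℝ (⊤ : ℕ∞) Ψ W ∧
      (∀ z ∈ U' ∩ unitSphere n, Ψ (Φ z) = z) ∧
      LipschitzOnWith K Φ (U' ∩ unitSphere n) ∧
      ∀ E ⊆ unitSphere n, μH[2 * (n : ℝ) - 2] E = 0 →
        μH[2 * (n : ℝ) - 2]
          (complexTangentProj z₀ '' (Φ '' (circleOrbit E ∩ (U' ∩ unitSphere n)))) = 0 := by

  have hz0 : ‖z₀‖ = 1 := mem_sphere_zero_iff_norm.1 hz₀
  have h1 : (⟪z₀, z₀⟫ : ℂ) = 1 := by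
    rw [inner_self_eq_norm_sq_to_K, hz0]; norm_num
  obtain ⟨K, hK⟩ := lipschitz_of_contDiff (auxPhi z₀) (contDiff_phi z₀)
  obtain ⟨K₂, hK₂⟩ := lipschitz_of_contDiff (auxG z₀) (contDiff_G z₀)
  set Ws : Set (ESp n) := {v | auxM z₀ v < 1/16 ∧ (auxS z₀ v) ^ 2 < 1/16} with hWs
  have hWopen : IsOpen Ws := by
    have h1o : IsOpen {v : ESp n | auxM z₀ v < 1/16} :=
      isOpen_lt (contDiff_auxM z₀).continuous continuous_const
    have h2o : IsOpen {v : ESp n | (auxS z₀ v) ^ 2 < 1/16} :=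
      isOpen_lt ((contDiff_auxS z₀).continuous.pow 2) continuous_const
    exact h1o.inter h2o
  set U's : Set (ESp n) := {z | 1/2 < (auxU z₀ z).re} ∩ (auxPhi z₀) ⁻¹' Ws with hU's
  have hU'open : IsOpen U's :=
    (isOpen_lt continuous_const
        (Complex.continuous_re.comp (contDiff_auxU z₀).continuous)).inter
      (hWopen.preimage (contDiff_phi z₀).continuous)
  have hphiz0 : auxPhi z₀ z₀ = 0 := by
    rw [auxPhi, auxG, auxU, h1]
    simp
  have hz₀U : z₀ ∈ U's := by
    refine ⟨?_, ?_⟩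
    · show 1/2 < (auxU z₀ z₀).re
      rw [auxU, h1]; norm_num
    · show auxPhi z₀ z₀ ∈ Ws
      rw [hphiz0]
      refine ⟨?_, ?_⟩
      · show auxM z₀ 0 < 1/16
        simp [auxM, complexTangentProj]
      · show (auxS z₀ 0) ^ 2 < 1/16
        simp [auxS]
  have hinv : ∀ z ∈ U's ∩ unitSphere n, auxPsi z₀ (auxPhi z₀ z) = z := by
    rintro z ⟨⟨hre, hWz⟩, hzs⟩
    exact psi_phi h1 hz0 z (mem_sphere_zero_iff_norm.1 hzs) hre hWz.1
  refine ⟨U's, Ws, auxPhi z₀, auxPsi z₀, K, hU'open, hz₀U, hWopen,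
    (contDiff_phi z₀).contDiffOn, hphiz0, ?_, ?_, contDiffOn_psi z₀, hinv, ?_, ?_⟩
  · intro z1 hz1 z2 hz2 he
    rw [← hinv z1 hz1, ← hinv z2 hz2, he]
  · ext v
    constructor
    · rintro ⟨z, ⟨⟨hre, hWz⟩, hzs⟩, rfl⟩
      refine ⟨hWz, ?_⟩
      show (⟪z₀, auxPhi z₀ z⟫ : ℂ).re = 0
      rw [inner_phi h1]; simp
    · rintro ⟨hvW, hvT⟩
      obtain ⟨hΦΨ, hnorm, hre⟩ := phi_psi h1 hz0 v hvT hvW.1 hvW.2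
      refine ⟨auxPsi z₀ v, ⟨⟨hre, ?_⟩, ?_⟩, hΦΨ⟩
      · show auxPhi z₀ (auxPsi z₀ v) ∈ Ws
        rw [hΦΨ]; exact hvW
      · exact mem_sphere_zero_iff_norm.2 hnorm
  · exact hK.mono (fun z hz => sphere_subset_closedBall hz.2)
  · intro E hE hE0
    have hdnn : (0:ℝ) ≤ 2 * (n:ℝ) - 2 := by
      have h2n : (2:ℝ) ≤ (n:ℝ) := by exact_mod_cast hn
      linarith
    have hsub : complexTangentProj z₀ ''
        (auxPhi z₀ '' (circleOrbit E ∩ (U's ∩ unitSphere n))) ⊆ auxG z₀ '' E := by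
      rintro x ⟨y, ⟨w, ⟨hworb, hwUS⟩, rfl⟩, rfl⟩
      obtain ⟨z, hzE, t, rfl⟩ := hworb
      refine ⟨z, hzE, ?_⟩
      rw [proj_phi h1, auxG_inv]
    have hE' : E ⊆ closedBall (0 : ESp n) 1 := fun z hz =>
      sphere_subset_closedBall (hE hz)
    have hle := (hK₂.mono hE').hausdorffMeasure_image_le hdnn
    rw [hE0, mul_zero] at hle
    exact le_antisymm (le_trans (measure_mono hsub) hle) (by simp)
end
end
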